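/- arXiv:2008.07869 — 7 statements merged into one kernel-verified Lean document; each statement's English description precedes it below -/
import Mathlib

section
/- The function C^M_{φ,ψ}(u,v) = uv·min{φ(u)/u, ψ(v)/v} for uv > 0 and 0 otherwise is a bivariate copula, i.e., it satisfies C(u,0)=C(0,v)=0, C(u,1)=u, C(1,v)=v, and is 2-increasing. -/
open Set

/-- The Marshall copula `C^M_{φ,ψ}`. -/
noncomputable def marshallC (φ ψ : ℝ → ℝ) (u v : ℝ) : ℝ :=
  if 0 < u * v then u * v * min (φ u / u) (ψ v / v) else 0

lemma marshallC_pos (φ ψ : ℝ → ℝ) {u v : ℝ} (hu : 0 < u) (hv : 0 < v) :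
    marshallC φ ψ u v = u * v * min (φ u / u) (ψ v / v) :=
  if_pos (mul_pos hu hv)

lemma marshallC_eq_min (φ ψ : ℝ → ℝ) {u v : ℝ} (hu : 0 < u) (hv : 0 < v) :
    marshallC φ ψ u v = min (v * φ u) (u * ψ v) := by
  rw [marshallC_pos _ _ hu hv, mul_min_of_nonneg _ _ (mul_pos hu hv).le]
  congr 1 <;> field_simp <;> ring

theorem marshallC_isCopula (φ ψ : ℝ → ℝ)
    (hφmono : MonotoneOn φ (Icc 0 1)) (hψmono : MonotoneOn ψ (Icc 0 1))
    (hφmap : ∀ u ∈ Icc (0:ℝ) 1, φ u ∈ Icc (0:ℝ) 1)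
    (hψmap : ∀ v ∈ Icc (0:ℝ) 1, ψ v ∈ Icc (0:ℝ) 1)
    (hφ0 : φ 0 = 0) (hψ0 : ψ 0 = 0) (hφ1 : φ 1 = 1) (hψ1 : ψ 1 = 1)
    (hφstar : AntitoneOn (fun u => φ u / u) (Ioc 0 1))
    (hψstar : AntitoneOn (fun v => ψ v / v) (Ioc 0 1)) :
    (∀ u ∈ Icc (0:ℝ) 1, marshallC φ ψ u 0 = 0) ∧
    (∀ v ∈ Icc (0:ℝ) 1, marshallC φ ψ 0 v = 0) ∧
    (∀ u ∈ Icc (0:ℝ) 1, marshallC φ ψ u 1 = u) ∧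
    (∀ v ∈ Icc (0:ℝ) 1, marshallC φ ψ 1 v = v) ∧
    (∀ u₁ u₂ v₁ v₂ : ℝ, u₁ ∈ Icc (0:ℝ) 1 → u₂ ∈ Icc (0:ℝ) 1 →
      v₁ ∈ Icc (0:ℝ) 1 → v₂ ∈ Icc (0:ℝ) 1 → u₁ ≤ u₂ → v₁ ≤ v₂ →
      0 ≤ marshallC φ ψ u₂ v₂ - marshallC φ ψ u₁ v₂
          - marshallC φ ψ u₂ v₁ + marshallC φ ψ u₁ v₁) := by
  refine ⟨?_, ?_, ?_, ?_, ?_⟩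
  · intro u _; simp [marshallC]
  · intro v _; simp [marshallC]
  · intro u hu
    rcases eq_or_lt_of_le hu.1 with h | h
    · simp [marshallC, ← h]
    · rw [marshallC_pos _ _ h one_pos]
      have h1 : (1:ℝ) ≤ φ u / u := by
        have := hφstar ⟨h, hu.2⟩ ⟨one_pos, le_refl 1⟩ hu.2
        simpa [hφ1] using this
      rw [hψ1, div_one, min_eq_right h1]
      ring
  · intro v hv
    rcases eq_or_lt_of_le hv.1 with h | h
    · simp [marshallC, ← h]
    · rw [marshallC_pos _ _ one_pos h]
      have h1 : (1:ℝ) ≤ ψ v / v := by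
        have := hψstar ⟨h, hv.2⟩ ⟨one_pos, le_refl 1⟩ hv.2
        simpa [hψ1] using this
      rw [hφ1, div_one, min_eq_left h1]
      ring
  · intro u₁ u₂ v₁ v₂ hu₁ hu₂ hv₁ hv₂ h12 hv12
    by_cases hu₂p : 0 < u₂
    swap
    · have hu₂0 : u₂ = 0 := le_antisymm (not_lt.mp hu₂p) hu₂.1
      have hu₁0 : u₁ = 0 := le_antisymm (hu₂0 ▸ h12) hu₁.1
      simp [marshallC, hu₁0, hu₂0]
    by_cases hv₂p : 0 < v₂
    swap
    · have hv₂0 : v₂ = 0 := le_antisymm (not_lt.mp hv₂p) hv₂.1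
      have hv₁0 : v₁ = 0 := le_antisymm (hv₂0 ▸ hv12) hv₁.1
      simp [marshallC, hv₁0, hv₂0]
    have hφ₁nn : 0 ≤ φ u₁ := (hφmap u₁ hu₁).1
    have hφ₂nn : 0 ≤ φ u₂ := (hφmap u₂ hu₂).1
    have hψ₁nn : 0 ≤ ψ v₁ := (hψmap v₁ hv₁).1
    have hψ₂nn : 0 ≤ ψ v₂ := (hψmap v₂ hv₂).1
    by_cases hu₁p : 0 < u₁
    · by_cases hv₁p : 0 < v₁
      · -- main case: all coordinates positive
        rw [marshallC_pos _ _ hu₁p hv₁p, marshallC_pos _ _ hu₁p hv₂p,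
          marshallC_pos _ _ hu₂p hv₁p, marshallC_pos _ _ hu₂p hv₂p]
        have ha : φ u₂ / u₂ ≤ φ u₁ / u₁ := hφstar ⟨hu₁p, hu₁.2⟩ ⟨hu₂p, hu₂.2⟩ h12
        have hb : ψ v₂ / v₂ ≤ ψ v₁ / v₁ := hψstar ⟨hv₁p, hv₁.2⟩ ⟨hv₂p, hv₂.2⟩ hv12
        have ha₂0 : 0 ≤ φ u₂ / u₂ := div_nonneg hφ₂nn hu₂p.le
        have hb₁0 : 0 ≤ ψ v₁ / v₁ := div_nonneg hψ₁nn hv₁p.le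
        have ha₁0 : 0 ≤ φ u₁ / u₁ := div_nonneg hφ₁nn hu₁p.le
        have hψmul : v₁ * (ψ v₁ / v₁) ≤ v₂ * (ψ v₂ / v₂) := by
          rw [mul_div_cancel₀ _ hv₁p.ne', mul_div_cancel₀ _ hv₂p.ne']
          exact hψmono hv₁ hv₂ hv12
        have hφmul : u₁ * (φ u₁ / u₁) ≤ u₂ * (φ u₂ / u₂) := by
          rw [mul_div_cancel₀ _ hu₁p.ne', mul_div_cancel₀ _ hu₂p.ne']
          exact hφmono hu₁ hu₂ h12
        rcases le_total (ψ v₂ / v₂) (φ u₂ / u₂) with hc | hc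
        · -- min at (u₂,v₂) is ψ-side
          have hc' : ψ v₂ / v₂ ≤ φ u₁ / u₁ := hc.trans ha
          rw [min_eq_right hc, min_eq_right hc']
          set m₂ := min (φ u₂ / u₂) (ψ v₁ / v₁) with hm₂def
          set m₁ := min (φ u₁ / u₁) (ψ v₁ / v₁) with hm₁def
          have hm : m₂ ≤ m₁ := min_le_min ha le_rfl
          have hm₂b : m₂ ≤ ψ v₁ / v₁ := min_le_right _ _
          have hm₂0 : 0 ≤ m₂ := le_min ha₂0 hb₁0
          nlinarith [mul_le_mul_of_nonneg_left hψmul (sub_nonneg.2 h12),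
            mul_le_mul_of_nonneg_left (mul_le_mul_of_nonneg_left hm₂b hv₁.1)
              (sub_nonneg.2 h12),
            mul_le_mul_of_nonneg_left (mul_le_mul_of_nonneg_left hm hv₁.1) hu₁.1]
        · -- min at (u₂,v₂) is φ-side
          have hc' : φ u₂ / u₂ ≤ ψ v₁ / v₁ := hc.trans hb
          rw [min_eq_left hc, min_eq_left hc']
          set m₂ := min (φ u₁ / u₁) (ψ v₂ / v₂) with hm₂def
          set m₁ := min (φ u₁ / u₁) (ψ v₁ / v₁) with hm₁def
          have hm : m₂ ≤ m₁ := min_le_min le_rfl hb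
          have hm₂a : m₂ ≤ φ u₁ / u₁ := min_le_left _ _
          have hm₂0 : 0 ≤ m₂ := le_min ha₁0 (div_nonneg hψ₂nn hv₂p.le)
          nlinarith [mul_le_mul_of_nonneg_left hφmul (sub_nonneg.2 hv12),
            mul_le_mul_of_nonneg_left (mul_le_mul_of_nonneg_left hm₂a hu₁.1)
              (sub_nonneg.2 hv12),
            mul_le_mul_of_nonneg_left (mul_le_mul_of_nonneg_left hm hu₁.1) hv₁.1]
      · -- v₁ = 0
        have hv₁0 : v₁ = 0 := le_antisymm (not_lt.mp hv₁p) hv₁.1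
        subst hv₁0
        have h0 : ∀ u, marshallC φ ψ u 0 = 0 := fun u => by simp [marshallC]
        rw [marshallC_eq_min _ _ hu₁p hv₂p, marshallC_eq_min _ _ hu₂p hv₂p, h0, h0]
        have := min_le_min
          (mul_le_mul_of_nonneg_left (hφmono hu₁ hu₂ h12) hv₂.1)
          (mul_le_mul_of_nonneg_right h12 hψ₂nn)
        linarith
    · -- u₁ = 0
      have hu₁0 : u₁ = 0 := le_antisymm (not_lt.mp hu₁p) hu₁.1
      subst hu₁0
      have h0 : ∀ v, marshallC φ ψ 0 v = 0 := fun v => by simp [marshallC]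
      rw [h0, h0]
      by_cases hv₁p : 0 < v₁
      · rw [marshallC_eq_min _ _ hu₂p hv₁p, marshallC_eq_min _ _ hu₂p hv₂p]
        have := min_le_min
          (mul_le_mul_of_nonneg_right hv12 hφ₂nn)
          (mul_le_mul_of_nonneg_left (hψmono hv₁ hv₂ hv12) hu₂.1)
        linarith
      · have hv₁0 : v₁ = 0 := le_antisymm (not_lt.mp hv₁p) hv₁.1
        subst hv₁0
        have h0' : marshallC φ ψ u₂ 0 = 0 := by simp [marshallC]
        rw [h0', marshallC_eq_min _ _ hu₂p hv₂p]
        have := le_min (mul_nonneg hv₂.1 hφ₂nn) (mul_nonneg hu₂.1 hψ₂nn)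
        linarith
end

section
/- Maxmin copulas are monotone increasing in φ and monotone decreasing in χ: if φ ≤ φ' and χ' ≤ χ pointwise, then C^MM_{φ,χ}(u,v) ≤ C^MM_{φ',χ'}(u,v) for all u,v ∈ [0,1]. -/
open Set

/-- The maxmin copula `C^MM_{φ,χ}`. -/
noncomputable def maxminC (φ χ : ℝ → ℝ) (u v : ℝ) : ℝ :=
  u * v + min (u * (1 - v)) ((φ u - u) * (v - χ v))

theorem maxminC_mono_in_generators (φ φ' χ χ' : ℝ → ℝ)
    (hφmono : MonotoneOn φ (Icc 0 1)) (hφ'mono : MonotoneOn φ' (Icc 0 1))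
    (hχmono : MonotoneOn χ (Icc 0 1)) (hχ'mono : MonotoneOn χ' (Icc 0 1))
    (hφ0 : φ 0 = 0) (hφ'0 : φ' 0 = 0) (hχ0 : χ 0 = 0) (hχ'0 : χ' 0 = 0)
    (hφ1 : φ 1 = 1) (hφ'1 : φ' 1 = 1) (hχ1 : χ 1 = 1) (hχ'1 : χ' 1 = 1)
    (hφge : ∀ u ∈ Icc (0:ℝ) 1, u ≤ φ u) (hφ'ge : ∀ u ∈ Icc (0:ℝ) 1, u ≤ φ' u)
    (hχle : ∀ v ∈ Icc (0:ℝ) 1, χ v ≤ v) (hχ'le : ∀ v ∈ Icc (0:ℝ) 1, χ' v ≤ v)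
    (hφmap : ∀ u ∈ Icc (0:ℝ) 1, φ u ∈ Icc (0:ℝ) 1)
    (hφ'map : ∀ u ∈ Icc (0:ℝ) 1, φ' u ∈ Icc (0:ℝ) 1)
    (hχmap : ∀ v ∈ Icc (0:ℝ) 1, χ v ∈ Icc (0:ℝ) 1)
    (hχ'map : ∀ v ∈ Icc (0:ℝ) 1, χ' v ∈ Icc (0:ℝ) 1)
    (hφle : ∀ u ∈ Icc (0:ℝ) 1, φ u ≤ φ' u)
    (hχ'leχ : ∀ v ∈ Icc (0:ℝ) 1, χ' v ≤ χ v) :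
    ∀ u ∈ Icc (0:ℝ) 1, ∀ v ∈ Icc (0:ℝ) 1,
      maxminC φ χ u v ≤ maxminC φ' χ' u v := by
  intro u hu v hv
  unfold maxminC
  have h1 : (0:ℝ) ≤ φ u - u := sub_nonneg.2 (hφge u hu)
  have h2 : (0:ℝ) ≤ v - χ v := sub_nonneg.2 (hχle v hv)
  have h3 : φ u - u ≤ φ' u - u := sub_le_sub_right (hφle u hu) u
  have h4 : v - χ v ≤ v - χ' v := sub_le_sub_left (hχ'leχ v hv) v
  have : (φ u - u) * (v - χ v) ≤ (φ' u - u) * (v - χ' v) :=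
    mul_le_mul h3 h4 h2 (le_trans h1 h3)
  gcongr
end

section
/- The function C^RMM_{f,g}(x,y) = max{0, xy − f(x)g(y)} is a bivariate copula (satisfies boundary conditions and 2-increasingness) whenever f and g satisfy the RMM generator conditions (G1)–(G3). -/
open Set

/-- The reflected maxmin (RMM) copula `C^RMM_{f,g}`. -/
noncomputable def rmmC (f g : ℝ → ℝ) (x y : ℝ) : ℝ :=
  max 0 (x * y - f x * g y)

/-- Conditions (G1)–(G3) on an RMM generator. -/
structure IsRMMGenerator (f : ℝ → ℝ) : Prop where
  map_mem : ∀ u ∈ Icc (0:ℝ) 1, f u ∈ Icc (0:ℝ) 1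
  zero : f 0 = 0
  one : f 1 = 0
  hat_mono : MonotoneOn (fun u => f u + u) (Icc 0 1)
  star_anti : AntitoneOn (fun u => f u / u) (Ioc 0 1)

namespace RMMAux

lemma nonneg {f : ℝ → ℝ} (hf : IsRMMGenerator f) {u : ℝ} (h : u ∈ Icc (0:ℝ) 1) :
    0 ≤ f u := (hf.map_mem u h).1

/-- The star condition in product form: `f b * a ≤ f a * b` for `0 < a ≤ b ≤ 1`. -/
lemma star {f : ℝ → ℝ} (hf : IsRMMGenerator f) {a b : ℝ}
    (ha : 0 < a) (hab : a ≤ b) (hb : b ≤ 1) : f b * a ≤ f a * b := by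
  have h := hf.star_anti ⟨ha, le_trans hab hb⟩ ⟨lt_of_lt_of_le ha hab, hb⟩ hab
  simp only at h
  rwa [div_le_div_iff₀ (lt_of_lt_of_le ha hab) ha] at h

/-- The hat condition: `f a - f b ≤ b - a` for `0 ≤ a ≤ b ≤ 1`. -/
lemma hat {f : ℝ → ℝ} (hf : IsRMMGenerator f) {a b : ℝ}
    (ha : 0 ≤ a) (hab : a ≤ b) (hb : b ≤ 1) : f a - f b ≤ b - a := by
  have h := hf.hat_mono ⟨ha, le_trans hab hb⟩ ⟨le_trans ha hab, hb⟩ hab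
  simp only at h
  linarith

/-- Positivity propagation: if `H(a,c) > 0` and `a ≤ b`, then `H(a,c) ≤ H(b,c)`. -/
lemma prop {f g : ℝ → ℝ} (hf : IsRMMGenerator f) (hg : IsRMMGenerator g)
    {a b c : ℝ} (ha : a ∈ Icc (0:ℝ) 1) (hb : b ∈ Icc (0:ℝ) 1) (hc : c ∈ Icc (0:ℝ) 1)
    (hab : a ≤ b) (hpos : 0 < a * c - f a * g c) :
    a * c - f a * g c ≤ b * c - f b * g c := by
  have hfa := nonneg hf ha
  have hfb := nonneg hf hb
  have hgc := nonneg hg hc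
  have hac : 0 < a * c := by nlinarith [mul_nonneg hfa hgc]
  have ha0 : 0 < a := by
    rcases lt_or_ge 0 a with h | h
    · exact h
    · nlinarith [mul_nonneg (neg_nonneg.2 h) hc.1, mul_nonneg hfa hgc]
  rcases le_or_gt (f b) (f a) with hA | hA
  · nlinarith [mul_nonneg (sub_nonneg.2 hA) hgc, mul_nonneg (sub_nonneg.2 hab) hc.1]
  · have hs := star hf ha0 hab hb.2
    -- (f b - f a) * g c * a ≤ f a * (b - a) * g c ≤ (b - a) * (a * c)
    nlinarith [mul_le_mul_of_nonneg_right (show (f b - f a) * a ≤ f a * (b - a) by nlinarith) hgc,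
      mul_le_mul_of_nonneg_right (le_of_lt (show f a * g c < a * c by linarith))
        (sub_nonneg.2 hab), ha0]

/-- Key rectangle estimate when `H₁₁ ≥ 0` (and the two mixed values are positive). -/
lemma keyA {f g : ℝ → ℝ} (hf : IsRMMGenerator f) (hg : IsRMMGenerator g)
    {u₁ u₂ v₁ v₂ : ℝ} (hu₁ : u₁ ∈ Icc (0:ℝ) 1) (hu₂ : u₂ ∈ Icc (0:ℝ) 1)
    (hv₁ : v₁ ∈ Icc (0:ℝ) 1) (hv₂ : v₂ ∈ Icc (0:ℝ) 1)
    (hu : u₁ ≤ u₂) (hv : v₁ ≤ v₂)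
    (h12 : 0 < u₁ * v₂ - f u₁ * g v₂) (h21 : 0 < u₂ * v₁ - f u₂ * g v₁)
    (h11 : f u₁ * g v₁ ≤ u₁ * v₁) :
    (f u₂ - f u₁) * (g v₂ - g v₁) ≤ (u₂ - u₁) * (v₂ - v₁) := by
  have hf1 := nonneg hf hu₁; have hf2 := nonneg hf hu₂
  have hg1 := nonneg hg hv₁; have hg2 := nonneg hg hv₂
  have hu₁0 : 0 < u₁ := by
    rcases lt_or_ge 0 u₁ with h | h
    · exact h
    · nlinarith [mul_nonneg hf1 hg2, mul_nonneg (neg_nonneg.2 h) (le_trans hv₁.1 hv)]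
  have hv₁0 : 0 < v₁ := by
    rcases lt_or_ge 0 v₁ with h | h
    · exact h
    · nlinarith [mul_nonneg hf2 hg1, mul_nonneg (neg_nonneg.2 h) hv₁.1]
  rcases le_or_gt (f u₂) (f u₁) with hA | hA
  · rcases le_or_gt (g v₂) (g v₁) with hB | hB
    · have h1 := hat hf hu₁.1 hu hu₂.2
      have h2 := hat hg hv₁.1 hv hv₂.2
      nlinarith [mul_le_mul h1 h2 (by linarith) (by linarith)]
    · nlinarith [mul_nonneg (sub_nonneg.2 hu) (sub_nonneg.2 hv),
        mul_nonneg (sub_nonneg.2 hA) (le_of_lt (sub_pos.2 hB))]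
  · rcases le_or_gt (g v₂) (g v₁) with hB | hB
    · nlinarith [mul_nonneg (sub_nonneg.2 hu) (sub_nonneg.2 hv),
        mul_nonneg (le_of_lt (sub_pos.2 hA)) (sub_nonneg.2 hB)]
    · have hsf := star hf hu₁0 hu hu₂.2
      have hsg := star hg hv₁0 hv hv₂.2
      have h1 : (f u₂ - f u₁) * u₁ ≤ f u₁ * (u₂ - u₁) := by nlinarith
      have h2 : (g v₂ - g v₁) * v₁ ≤ g v₁ * (v₂ - v₁) := by nlinarith
      have hAB : ((f u₂ - f u₁) * u₁) * ((g v₂ - g v₁) * v₁)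
          ≤ (f u₁ * (u₂ - u₁)) * (g v₁ * (v₂ - v₁)) :=
        mul_le_mul h1 h2 (by nlinarith) (by nlinarith)
      nlinarith [mul_pos hu₁0 hv₁0,
        mul_nonneg (sub_nonneg.2 hu) (sub_nonneg.2 hv),
        mul_le_mul_of_nonneg_right h11
          (mul_nonneg (sub_nonneg.2 hu) (sub_nonneg.2 hv))]

/-- Key rectangle estimate when `H₁₁ ≤ 0` (and the two mixed values are positive). -/
lemma keyB {f g : ℝ → ℝ} (hf : IsRMMGenerator f) (hg : IsRMMGenerator g)
    {u₁ u₂ v₁ v₂ : ℝ} (hu₁ : u₁ ∈ Icc (0:ℝ) 1) (hu₂ : u₂ ∈ Icc (0:ℝ) 1)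
    (hv₁ : v₁ ∈ Icc (0:ℝ) 1) (hv₂ : v₂ ∈ Icc (0:ℝ) 1)
    (hu : u₁ ≤ u₂) (hv : v₁ ≤ v₂)
    (h12 : 0 < u₁ * v₂ - f u₁ * g v₂) (h21 : 0 < u₂ * v₁ - f u₂ * g v₁)
    (h11 : u₁ * v₁ - f u₁ * g v₁ ≤ 0) :
    u₁ * v₁ - f u₁ * g v₁ ≤ (u₂ - u₁) * (v₂ - v₁) - (f u₂ - f u₁) * (g v₂ - g v₁) := by
  have hf1 := nonneg hf hu₁; have hf2 := nonneg hf hu₂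
  have hg1 := nonneg hg hv₁; have hg2 := nonneg hg hv₂
  have hu₁0 : 0 < u₁ := by
    rcases lt_or_ge 0 u₁ with h | h
    · exact h
    · nlinarith [mul_nonneg hf1 hg2, mul_nonneg (neg_nonneg.2 h) (le_trans hv₁.1 hv)]
  have hv₁0 : 0 < v₁ := by
    rcases lt_or_ge 0 v₁ with h | h
    · exact h
    · nlinarith [mul_nonneg hf2 hg1, mul_nonneg (neg_nonneg.2 h) hv₁.1]
  rcases le_or_gt (f u₂) (f u₁) with hA | hA
  · rcases le_or_gt (g v₂) (g v₁) with hB | hB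
    · have h1 := hat hf hu₁.1 hu hu₂.2
      have h2 := hat hg hv₁.1 hv hv₂.2
      nlinarith [mul_le_mul h1 h2 (by linarith) (by linarith)]
    · nlinarith [mul_nonneg (sub_nonneg.2 hu) (sub_nonneg.2 hv),
        mul_nonneg (sub_nonneg.2 hA) (le_of_lt (sub_pos.2 hB))]
  · rcases le_or_gt (g v₂) (g v₁) with hB | hB
    · nlinarith [mul_nonneg (sub_nonneg.2 hu) (sub_nonneg.2 hv),
        mul_nonneg (le_of_lt (sub_pos.2 hA)) (sub_nonneg.2 hB)]
    · have hsf := star hf hu₁0 hu hu₂.2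
      have hsg := star hg hv₁0 hv hv₂.2
      have h1 : (f u₂ - f u₁) * u₁ ≤ f u₁ * (u₂ - u₁) := by nlinarith
      have h2 : (g v₂ - g v₁) * v₁ ≤ g v₁ * (v₂ - v₁) := by nlinarith
      rcases le_or_gt ((u₂ - u₁) * (v₂ - v₁)) (u₁ * v₁) with hle | hgt
      · have hAB : ((f u₂ - f u₁) * u₁) * ((g v₂ - g v₁) * v₁)
            ≤ (f u₁ * (u₂ - u₁)) * (g v₁ * (v₂ - v₁)) :=
          mul_le_mul h1 h2 (by nlinarith) (by nlinarith)
        -- (target)·(u₁v₁) ≥ H₁₁·(ΔuΔv - u₁v₁) ≥ 0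
        nlinarith [mul_pos hu₁0 hv₁0,
          mul_nonneg (mul_nonneg (le_of_lt hu₁0) (le_of_lt hv₁0))
            (sub_nonneg.2 hle),
          mul_le_mul_of_nonneg_left (sub_nonneg.2 hle)
            (show (0:ℝ) ≤ f u₁ * g v₁ - u₁ * v₁ by linarith)]
      · rcases le_or_gt ((u₂ * v₁ - f u₂ * g v₁) * u₁)
            ((u₂ - u₁) * (u₁ * v₂ - f u₁ * g v₂)) with h | h
        · -- target·u₁ ≥ Δu·H₁₂ - H₂₁·u₁ ≥ 0
          nlinarith [mul_le_mul_of_nonneg_left h1 hg2, hu₁0,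
            mul_pos hu₁0 hv₁0]
        · -- H₂₁·u₁ > Δu·H₁₂, combined with ΔuΔv > u₁v₁ gives Δv·H₂₁·u₁ ≥ v₁·H₁₂·u₁,
          -- then target·v₁ ≥ Δv·H₂₁ - v₁·H₁₂ ≥ 0
          have key : v₁ * (u₁ * v₂ - f u₁ * g v₂) * u₁
              ≤ (v₂ - v₁) * (u₂ * v₁ - f u₂ * g v₁) * u₁ := by
            nlinarith [mul_le_mul_of_nonneg_left (le_of_lt h) (sub_nonneg.2 hv),
              mul_le_mul_of_nonneg_right (le_of_lt hgt) (le_of_lt h12)]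
          nlinarith [mul_le_mul_of_nonneg_left h2 hf2, hv₁0, hu₁0,
            mul_pos hu₁0 hv₁0]

end RMMAux

theorem rmmC_isCopula (f g : ℝ → ℝ)
    (hf : IsRMMGenerator f) (hg : IsRMMGenerator g) :
    (∀ u ∈ Icc (0:ℝ) 1, rmmC f g u 0 = 0) ∧
    (∀ v ∈ Icc (0:ℝ) 1, rmmC f g 0 v = 0) ∧
    (∀ u ∈ Icc (0:ℝ) 1, rmmC f g u 1 = u) ∧
    (∀ v ∈ Icc (0:ℝ) 1, rmmC f g 1 v = v) ∧
    (∀ u₁ u₂ v₁ v₂ : ℝ, u₁ ∈ Icc (0:ℝ) 1 → u₂ ∈ Icc (0:ℝ) 1 →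
      v₁ ∈ Icc (0:ℝ) 1 → v₂ ∈ Icc (0:ℝ) 1 → u₁ ≤ u₂ → v₁ ≤ v₂ →
      0 ≤ rmmC f g u₂ v₂ - rmmC f g u₁ v₂ - rmmC f g u₂ v₁ + rmmC f g u₁ v₁) := by
  refine ⟨?_, ?_, ?_, ?_, ?_⟩
  · intro u hu; simp [rmmC, hg.zero]
  · intro v hv; simp [rmmC, hf.zero]
  · intro u hu; simp [rmmC, hg.one, max_eq_right hu.1]
  · intro v hv; simp [rmmC, hf.one, max_eq_right hv.1]
  · intro u₁ u₂ v₁ v₂ hu₁ hu₂ hv₁ hv₂ hu hv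
    simp only [rmmC]
    set H11 := u₁ * v₁ - f u₁ * g v₁ with hH11
    set H12 := u₁ * v₂ - f u₁ * g v₂ with hH12
    set H21 := u₂ * v₁ - f u₂ * g v₁ with hH21
    set H22 := u₂ * v₂ - f u₂ * g v₂ with hH22
    rcases le_or_gt H12 0 with h12 | h12
    · rcases le_or_gt H21 0 with h21 | h21
      · rw [max_eq_left h12, max_eq_left h21]
        have := le_max_left (0:ℝ) H22
        have := le_max_left (0:ℝ) H11
        linarith
      · -- H12 ≤ 0, H21 > 0
        have hprop : H21 ≤ H22 := by
          have := RMMAux.prop hg hf hv₁ hv₂ hu₂ hv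
            (show 0 < v₁ * u₂ - g v₁ * f u₂ by rw [hH21] at h21; nlinarith)
          rw [hH21, hH22]; nlinarith
        have h11 : H11 ≤ 0 := by
          by_contra hc
          push_neg at hc
          have := RMMAux.prop hg hf hv₁ hv₂ hu₁ hv
            (show 0 < v₁ * u₁ - g v₁ * f u₁ by rw [hH11] at hc; nlinarith)
          rw [hH12] at h12; nlinarith
        rw [max_eq_left h12, max_eq_left h11, max_eq_right (le_of_lt h21)]
        have h22 : H22 ≤ max 0 H22 := le_max_right _ _
        linarith
    · rcases le_or_gt H21 0 with h21 | h21
      · -- H21 ≤ 0, H12 > 0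
        have hprop : H12 ≤ H22 := by
          have := RMMAux.prop hf hg hu₁ hu₂ hv₂ hu (by rw [hH12] at h12; exact h12)
          rw [hH12, hH22]; linarith
        have h11 : H11 ≤ 0 := by
          by_contra hc
          push_neg at hc
          have := RMMAux.prop hf hg hu₁ hu₂ hv₁ hu (by rw [hH11] at hc; exact hc)
          rw [hH21] at h21; linarith
        rw [max_eq_left h21, max_eq_left h11, max_eq_right (le_of_lt h12)]
        have h22 : H22 ≤ max 0 H22 := le_max_right _ _
        linarith
      · -- H12 > 0, H21 > 0
        rw [max_eq_right (le_of_lt h12), max_eq_right (le_of_lt h21)]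
        have h22 : H22 ≤ max 0 H22 := le_max_right _ _
        rcases le_or_gt H11 0 with h11 | h11
        · rw [max_eq_left h11]
          have := RMMAux.keyB hf hg hu₁ hu₂ hv₁ hv₂ hu hv h12 h21 h11
          have hid : H22 - H12 - H21 =
              ((u₂ - u₁) * (v₂ - v₁) - (f u₂ - f u₁) * (g v₂ - g v₁)) - H11 := by
            rw [hH11, hH12, hH21, hH22]; ring
          linarith
        · rw [max_eq_right (le_of_lt h11)]
          have hk := RMMAux.keyA hf hg hu₁ hu₂ hv₁ hv₂ hu hv h12 h21
            (by rw [hH11] at h11; linarith)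
          have hid : H22 - H12 - H21 + H11 =
              (u₂ - u₁) * (v₂ - v₁) - (f u₂ - f u₁) * (g v₂ - g v₁) := by
            rw [hH11, hH12, hH21, hH22]; ring
          linarith
end

section
/- With U = max{X,Z}, W = min{Y,Z} for independent X, Y, Z, and generators f, g satisfying f(F_X F_Z) = F_X(1−F_Z) and g((1−F_Y)(1−F_Z)) = (1−F_Y)F_Z wherever the arguments are positive, the mixed joint distribution H^σ(x,y) = P(U ≤ x, W > y) equals C^RMM_{f,g}(F_U(x), 1−F_W(y)) = max{0, F_U(x)(1−F_W(y)) − f(F_U(x))·g(1−F_W(y))}. -/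
open MeasureTheory ProbabilityTheory Set

theorem mixed_joint_dist_eq_rmm (Ω : Type*) [MeasureSpace Ω]
    (μ : Measure Ω) [IsProbabilityMeasure μ]
    (X Y Z : Ω → ℝ) (hX : Measurable X) (hY : Measurable Y) (hZ : Measurable Z)
    (hindep : iIndepFun (m := fun _ : Fin 3 => (inferInstance : MeasurableSpace ℝ))
      ![X, Y, Z] μ)
    (FX FY FZ : ℝ → ℝ)
    (hFX : ∀ x, FX x = (μ {ω | X ω ≤ x}).toReal)
    (hFY : ∀ y, FY y = (μ {ω | Y ω ≤ y}).toReal)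
    (hFZ : ∀ z, FZ z = (μ {ω | Z ω ≤ z}).toReal)
    (f g : ℝ → ℝ)
    (hfmap : ∀ t ∈ Icc (0:ℝ) 1, f t ∈ Icc (0:ℝ) 1)
    (hgmap : ∀ t ∈ Icc (0:ℝ) 1, g t ∈ Icc (0:ℝ) 1)
    (hfeq : ∀ x : ℝ, 0 < FX x * FZ x → f (FX x * FZ x) = FX x * (1 - FZ x))
    (hgeq : ∀ y : ℝ, 0 < (1 - FY y) * (1 - FZ y) →
      g ((1 - FY y) * (1 - FZ y)) = (1 - FY y) * FZ y) :
    ∀ x y : ℝ,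
      (μ {ω | max (X ω) (Z ω) ≤ x ∧ y < min (Y ω) (Z ω)}).toReal =
        max 0 ((FX x * FZ x) * ((1 - FY y) * (1 - FZ y)) -
          f (FX x * FZ x) * g ((1 - FY y) * (1 - FZ y))) := by
  intro x y
  -- independence step
  have key := hindep.measure_inter_preimage_eq_mul Finset.univ
    (sets := ![Set.Iic x, Set.Ioi y, Set.Ioc y x])
    (by intro i _; fin_cases i <;>
      simp [measurableSet_Iic, measurableSet_Ioi, measurableSet_Ioc])
  have hset : {ω | max (X ω) (Z ω) ≤ x ∧ y < min (Y ω) (Z ω)} =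
      ⋂ i ∈ Finset.univ, ![X, Y, Z] i ⁻¹' ![Set.Iic x, Set.Ioi y, Set.Ioc y x] i := by
    ext ω
    constructor
    · rintro ⟨hmax, hmin⟩
      rw [max_le_iff] at hmax; rw [lt_min_iff] at hmin
      refine Set.mem_iInter₂.mpr ?_
      intro i _
      fin_cases i <;> simp only [Matrix.cons_val_zero, Matrix.cons_val_one, Matrix.head_cons,
        Matrix.cons_val_two, Matrix.tail_cons, Set.mem_preimage, Set.mem_Iic, Set.mem_Ioi,
        Set.mem_Ioc]
      · exact hmax.1
      · exact hmin.1
      · exact ⟨hmin.2, hmax.2⟩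
    · intro h
      have h0 := Set.mem_iInter₂.mp h 0 (Finset.mem_univ _)
      have h1 := Set.mem_iInter₂.mp h 1 (Finset.mem_univ _)
      have h2 := Set.mem_iInter₂.mp h 2 (Finset.mem_univ _)
      simp only [Matrix.cons_val_zero, Matrix.cons_val_one, Matrix.head_cons,
        Matrix.cons_val_two, Matrix.tail_cons, Set.mem_preimage, Set.mem_Iic, Set.mem_Ioi,
        Set.mem_Ioc] at h0 h1 h2
      exact ⟨max_le h0 h2.2, lt_min h1 h2.1⟩
  rw [hset, key, Fin.prod_univ_three]
  simp only [Matrix.cons_val_zero, Matrix.cons_val_one, Matrix.head_cons,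
    Matrix.cons_val_two, Matrix.tail_cons]
  rw [ENNReal.toReal_mul, ENNReal.toReal_mul]
  -- basic facts
  have hle1 : ∀ s : Set Ω, (μ s).toReal ≤ 1 := fun s => by
    have := ENNReal.toReal_mono ENNReal.one_ne_top (prob_le_one (μ := μ) (s := s))
    simpa using this
  have hpX : FX x = (μ (X ⁻¹' Set.Iic x)).toReal := hFX x
  have hpZx : FZ x = (μ (Z ⁻¹' Set.Iic x)).toReal := hFZ x
  have hpZy : FZ y = (μ (Z ⁻¹' Set.Iic y)).toReal := hFZ y
  have hcomplY : Y ⁻¹' Set.Ioi y = (Y ⁻¹' Set.Iic y)ᶜ := by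
    rw [← Set.preimage_compl, Set.compl_Iic]
  have hqY : (μ (Y ⁻¹' Set.Ioi y)).toReal = 1 - FY y := by
    rw [hcomplY, prob_compl_eq_one_sub (hY measurableSet_Iic),
      ENNReal.toReal_sub_of_le prob_le_one ENNReal.one_ne_top, ENNReal.toReal_one, hFY]
    rfl
  have hcomplZ : Z ⁻¹' Set.Ioi y = (Z ⁻¹' Set.Iic y)ᶜ := by
    rw [← Set.preimage_compl, Set.compl_Iic]
  have hqZ : (μ (Z ⁻¹' Set.Ioi y)).toReal = 1 - FZ y := by
    rw [hcomplZ, prob_compl_eq_one_sub (hZ measurableSet_Iic),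
      ENNReal.toReal_sub_of_le prob_le_one ENNReal.one_ne_top, ENNReal.toReal_one, hFZ]
    rfl
  have hFXnn : 0 ≤ FX x := hpX ▸ ENNReal.toReal_nonneg
  have hFZxnn : 0 ≤ FZ x := hpZx ▸ ENNReal.toReal_nonneg
  have hFZynn : 0 ≤ FZ y := hpZy ▸ ENNReal.toReal_nonneg
  have hFX1 : FX x ≤ 1 := hpX ▸ hle1 _
  have hFZx1 : FZ x ≤ 1 := hpZx ▸ hle1 _
  have hFZy1 : FZ y ≤ 1 := hpZy ▸ hle1 _
  have hqYnn : 0 ≤ 1 - FY y := hqY ▸ ENNReal.toReal_nonneg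
  have hqZnn : 0 ≤ 1 - FZ y := hqZ ▸ ENNReal.toReal_nonneg
  have hqY1 : 1 - FY y ≤ 1 := hqY ▸ hle1 _
  have hrnn : (0:ℝ) ≤ (μ (Z ⁻¹' Set.Ioc y x)).toReal := ENNReal.toReal_nonneg
  have hr_le_FZx : (μ (Z ⁻¹' Set.Ioc y x)).toReal ≤ FZ x := by
    rw [hpZx]
    exact ENNReal.toReal_mono (measure_ne_top μ _)
      (measure_mono (Set.preimage_mono Set.Ioc_subset_Iic_self))
  have hr_le_qZ : (μ (Z ⁻¹' Set.Ioc y x)).toReal ≤ 1 - FZ y := by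
    rw [← hqZ]
    exact ENNReal.toReal_mono (measure_ne_top μ _)
      (measure_mono (Set.preimage_mono Set.Ioc_subset_Ioi_self))
  by_cases ha : 0 < FX x * FZ x
  · by_cases hb : 0 < (1 - FY y) * (1 - FZ y)
    · rw [hfeq x ha, hgeq y hb]
      have hinner : (FX x * FZ x) * ((1 - FY y) * (1 - FZ y)) -
          (FX x * (1 - FZ x)) * ((1 - FY y) * FZ y) =
          (FX x * (1 - FY y)) * (FZ x - FZ y) := by ring
      rw [hinner, hqY]
      by_cases hyx : y < x
      · have hZmono : FZ y ≤ FZ x := by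
          rw [hpZx, hpZy]
          exact ENNReal.toReal_mono (measure_ne_top μ _)
            (measure_mono (Set.preimage_mono (Set.Iic_subset_Iic.mpr hyx.le)))
        have hr : (μ (Z ⁻¹' Set.Ioc y x)).toReal = FZ x - FZ y := by
          have hsub : Z ⁻¹' Set.Iic y ⊆ Z ⁻¹' Set.Iic x :=
            Set.preimage_mono (Set.Iic_subset_Iic.mpr hyx.le)
          have hdiff : Z ⁻¹' Set.Ioc y x = Z ⁻¹' Set.Iic x \ Z ⁻¹' Set.Iic y := by
            rw [← Set.preimage_diff]; congr 1; ext t; simp [and_comm]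
          rw [hdiff, measure_diff hsub (hZ measurableSet_Iic).nullMeasurableSet
            (measure_ne_top μ _),
            ENNReal.toReal_sub_of_le (measure_mono hsub) (measure_ne_top μ _), hpZx, hpZy]
        rw [hr, ← hpX,
          max_eq_right (mul_nonneg (mul_nonneg hFXnn hqYnn)
            (by linarith : (0:ℝ) ≤ FZ x - FZ y))]
      · have hr : μ (Z ⁻¹' Set.Ioc y x) = 0 := by
          rw [Set.Ioc_eq_empty hyx, Set.preimage_empty, measure_empty]
        rw [hr]
        have hZmono : FZ x ≤ FZ y := by
          rw [hpZx, hpZy]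
          exact ENNReal.toReal_mono (measure_ne_top μ _)
            (measure_mono (Set.preimage_mono (Set.Iic_subset_Iic.mpr (not_lt.mp hyx))))
        have : (FX x * (1 - FY y)) * (FZ x - FZ y) ≤ 0 :=
          mul_nonpos_of_nonneg_of_nonpos (mul_nonneg hFXnn hqYnn) (by linarith)
        simp [max_eq_left this]
    · -- b = 0
      have hb0 : (1 - FY y) * (1 - FZ y) = 0 := by
        have : 0 ≤ (1 - FY y) * (1 - FZ y) := mul_nonneg hqYnn hqZnn
        linarith [lt_or_eq_of_le this |>.elim (fun h => absurd h hb) (fun h => h.symm)]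
      have hamem : FX x * FZ x ∈ Set.Icc (0:ℝ) 1 :=
        ⟨mul_nonneg hFXnn hFZxnn, mul_le_one₀ hFX1 hFZxnn hFZx1⟩
      have hbmem : (1 - FY y) * (1 - FZ y) ∈ Set.Icc (0:ℝ) 1 :=
        ⟨mul_nonneg hqYnn hqZnn, mul_le_one₀ hqY1 hqZnn (by linarith)⟩
      have hrhs : max 0 ((FX x * FZ x) * ((1 - FY y) * (1 - FZ y)) -
          f (FX x * FZ x) * g ((1 - FY y) * (1 - FZ y))) = 0 := by
        apply max_eq_left
        have hf := hfmap _ hamem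
        have hg := hgmap _ hbmem
        have h0 : FX x * FZ x * ((1 - FY y) * (1 - FZ y)) = 0 := by rw [hb0]; ring
        nlinarith [mul_nonneg hf.1 hg.1]
      rw [hrhs]
      rcases mul_eq_zero.mp hb0 with h | h
      · rw [hqY, h]; ring
      · have : (μ (Z ⁻¹' Set.Ioc y x)).toReal = 0 := le_antisymm (by linarith) hrnn
        rw [this]; ring
  · -- a = 0
    have ha0 : FX x * FZ x = 0 := by
      have : 0 ≤ FX x * FZ x := mul_nonneg hFXnn hFZxnn
      rcases lt_or_eq_of_le this with h | h
      · exact absurd h ha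
      · exact h.symm
    have hamem : FX x * FZ x ∈ Set.Icc (0:ℝ) 1 :=
      ⟨mul_nonneg hFXnn hFZxnn, mul_le_one₀ hFX1 hFZxnn hFZx1⟩
    have hbmem : (1 - FY y) * (1 - FZ y) ∈ Set.Icc (0:ℝ) 1 :=
      ⟨mul_nonneg hqYnn hqZnn, mul_le_one₀ hqY1 hqZnn (by linarith)⟩
    have hrhs : max 0 ((FX x * FZ x) * ((1 - FY y) * (1 - FZ y)) -
        f (FX x * FZ x) * g ((1 - FY y) * (1 - FZ y))) = 0 := by
      apply max_eq_left
      have hf := hfmap _ hamem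
      have hg := hgmap _ hbmem
      have h0 : FX x * FZ x * ((1 - FY y) * (1 - FZ y)) = 0 := by rw [ha0]; ring
      nlinarith [mul_nonneg hf.1 hg.1]
    rw [hrhs]
    rcases mul_eq_zero.mp ha0 with h | h
    · rw [hpX] at h; rw [h]; ring
    · have : (μ (Z ⁻¹' Set.Ioc y x)).toReal = 0 :=
        le_antisymm (by rw [h] at hr_le_FZx; exact hr_le_FZx) hrnn
      rw [this]; ring
end

section
/- In the exponential shock model with fixed exogenous shock at time 1, the RMM copula generated by f(u) = max{1−e^{−λ}−u, 0} and g(w) = max{e^{−μ}−w, 0} (for u,w ∈ (0,1], with f(0)=g(0)=0) satisfies: C^RMM_{f,g}(u,w) = 0 if e^{−μ}u + (1−e^{−λ})w ≤ e^{−μ}(1−e^{−λ}); equals e^{−μ}u + (1−e^{−λ})w − e^{−μ}(1−e^{−λ}) if this quantity is positive and u ≤ 1−e^{−λ}, w ≤ e^{−μ}; and equals uw if u > 1−e^{−λ} or w > e^{−μ}. -/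
open Set Real

theorem exponential_shock_rmm_copula (lam mu : ℝ) (hlam : 0 < lam) (hmu : 0 < mu)
    (f g : ℝ → ℝ)
    (hf0 : f 0 = 0) (hg0 : g 0 = 0)
    (hf : ∀ u ∈ Ioc (0:ℝ) 1, f u = max (1 - exp (-lam) - u) 0)
    (hg : ∀ w ∈ Ioc (0:ℝ) 1, g w = max (exp (-mu) - w) 0) :
    ∀ u ∈ Icc (0:ℝ) 1, ∀ w ∈ Icc (0:ℝ) 1,
      (exp (-mu) * u + (1 - exp (-lam)) * w ≤ exp (-mu) * (1 - exp (-lam)) →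
        max 0 (u * w - f u * g w) = 0) ∧
      (exp (-mu) * (1 - exp (-lam)) < exp (-mu) * u + (1 - exp (-lam)) * w →
        u ≤ 1 - exp (-lam) → w ≤ exp (-mu) →
        max 0 (u * w - f u * g w) =
          exp (-mu) * u + (1 - exp (-lam)) * w - exp (-mu) * (1 - exp (-lam))) ∧
      (1 - exp (-lam) < u ∨ exp (-mu) < w →
        max 0 (u * w - f u * g w) = u * w) := by
  have ha : 0 < 1 - exp (-lam) := by
    have : exp (-lam) < 1 := exp_lt_one_iff.mpr (by linarith)
    linarith
  have hb : 0 < exp (-mu) := exp_pos _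
  have hb1 : exp (-mu) < 1 := exp_lt_one_iff.mpr (by linarith)
  intro u hu w hw
  rcases eq_or_lt_of_le hu.1 with h0u | h0u
  · -- u = 0
    rw [← h0u, hf0]
    simp only [zero_mul, sub_zero, max_self]
    refine ⟨fun _ => trivial, fun h1 _ hwb => ?_, fun _ => trivial⟩
    exfalso
    nlinarith [mul_le_mul_of_nonneg_left hwb ha.le]
  rcases eq_or_lt_of_le hw.1 with h0w | h0w
  · -- w = 0
    rw [← h0w, hg0]
    simp only [mul_zero, sub_zero, max_self]
    refine ⟨fun _ => trivial, fun h1 hua _ => ?_, fun _ => trivial⟩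
    exfalso
    nlinarith [mul_le_mul_of_nonneg_left hua hb.le]
  rw [hf u ⟨h0u, hu.2⟩, hg w ⟨h0w, hw.2⟩]
  rcases le_or_gt u (1 - exp (-lam)) with hua | hua
  · rcases le_or_gt w (exp (-mu)) with hwb | hwb
    · rw [max_eq_left (by linarith : (0:ℝ) ≤ 1 - exp (-lam) - u),
        max_eq_left (by linarith : (0:ℝ) ≤ exp (-mu) - w)]
      refine ⟨fun h1 => ?_, fun h1 _ _ => ?_, fun h3 => ?_⟩
      · rw [max_eq_left]; nlinarith
      · rw [max_eq_right (by nlinarith)]; ring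
      · rcases h3 with h | h <;> linarith
    · -- g w = 0
      rw [max_eq_right (by linarith : exp (-mu) - w ≤ 0), mul_zero, sub_zero,
        max_eq_right (mul_nonneg h0u.le h0w.le)]
      refine ⟨fun h1 => ?_, fun _ _ hwb => ?_, fun _ => rfl⟩
      · exfalso; nlinarith [mul_pos hb h0u, mul_lt_mul_of_pos_left hwb ha]
      · linarith
  · -- f u = 0
    rw [max_eq_right (by linarith : 1 - exp (-lam) - u ≤ 0), zero_mul, sub_zero,
      max_eq_right (mul_nonneg h0u.le h0w.le)]
    refine ⟨fun h1 => ?_, fun _ hua' _ => ?_, fun _ => rfl⟩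
    · exfalso; nlinarith [mul_pos ha h0w, mul_lt_mul_of_pos_left hua hb]
    · linarith
end

section
/- For generators φ₁,…,φ_n satisfying (P1)–(P3) and distribution functions F₁,…,F_n, F_Z, setting Gᵢ = FᵢF_Z and assuming φᵢ(Gᵢ(x)) = Fᵢ(x) whenever Gᵢ(x) > 0, the joint distribution H(x₁,…,x_n) = F₁(x₁)⋯F_n(x_n)·F_Z(min{x₁,…,x_n}) equals C^M_𝛗(G₁(x₁),…,G_n(x_n)), where C^M_𝛗(u) = (∏ᵢ φᵢ(uᵢ))·minᵢ{uᵢ/φᵢ(uᵢ)} when all φᵢ(uᵢ) > 0 and 0 otherwise. -/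
open Set

/-- The `n`-variate Marshall copula `C^M_𝛗`. -/
noncomputable def marshallCN {n : ℕ} (φ : Fin (n + 1) → ℝ → ℝ)
    (u : Fin (n + 1) → ℝ) : ℝ :=
  if ∀ i, 0 < φ i (u i) then
    (∏ i, φ i (u i)) *
      Finset.univ.inf' Finset.univ_nonempty (fun i => u i / φ i (u i))
  else 0

theorem multivariate_marshall_sklar {n : ℕ} (φ : Fin (n + 1) → ℝ → ℝ)
    (F : Fin (n + 1) → ℝ → ℝ) (FZ : ℝ → ℝ) (G : Fin (n + 1) → ℝ → ℝ)
    (hφmono : ∀ i, MonotoneOn (φ i) (Icc 0 1))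
    (hφmap : ∀ i, ∀ u ∈ Icc (0:ℝ) 1, φ i u ∈ Icc (0:ℝ) 1)
    (hφ0 : ∀ i, φ i 0 = 0) (hφ1 : ∀ i, φ i 1 = 1)
    (hφstar : ∀ i, AntitoneOn (fun u => φ i u / u) (Ioc 0 1))
    (hFmono : ∀ i, Monotone (F i)) (hFZmono : Monotone FZ)
    (hFmap : ∀ i x, F i x ∈ Icc (0:ℝ) 1) (hFZmap : ∀ x, FZ x ∈ Icc (0:ℝ) 1)
    (hG : ∀ i x, G i x = F i x * FZ x)
    (hφG : ∀ i x, 0 < G i x → φ i (G i x) = F i x) :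
    ∀ x : Fin (n + 1) → ℝ,
      (∏ i, F i (x i)) * FZ (Finset.univ.inf' Finset.univ_nonempty x) =
        marshallCN φ (fun i => G i (x i)) := by
  intro x
  have hGnn : ∀ i, 0 ≤ G i (x i) := fun i => by
    rw [hG]; exact mul_nonneg (hFmap i (x i)).1 (hFZmap (x i)).1
  unfold marshallCN
  by_cases h : ∀ i, 0 < φ i (G i (x i))
  · rw [if_pos h]
    have hGpos : ∀ i, 0 < G i (x i) := by
      intro i
      rcases (hGnn i).lt_or_eq with hp | he
      · exact hp
      · exfalso; have := h i; rw [← he, hφ0] at this; exact lt_irrefl 0 this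
    have hφF : ∀ i, φ i (G i (x i)) = F i (x i) := fun i => hφG i (x i) (hGpos i)
    have hFpos : ∀ i, 0 < F i (x i) := fun i => (hφF i) ▸ h i
    have hdiv : ∀ i, G i (x i) / φ i (G i (x i)) = FZ (x i) := by
      intro i
      rw [hφF i, hG, mul_comm, mul_div_assoc, div_self (hFpos i).ne', mul_one]
    rw [Finset.prod_congr rfl (fun i _ => hφF i)]
    congr 1
    rw [Finset.apply_inf'_eq_inf'_comp _ FZ (fun a b => hFZmono.map_min)]
    exact Finset.inf'_congr _ rfl (fun i _ => (hdiv i).symm)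
  · rw [if_neg h]
    push_neg at h
    obtain ⟨i, hi⟩ := h
    have hG0 : G i (x i) = 0 := by
      rcases (hGnn i).lt_or_eq with hp | he
      · exfalso
        have hF := hφG i (x i) hp
        have hFp : 0 < F i (x i) := by
          rcases (hFmap i (x i)).1.lt_or_eq with h1 | h1
          · exact h1
          · exfalso; rw [hG, ← h1, zero_mul] at hp; exact lt_irrefl 0 hp
        rw [hF] at hi
        exact absurd hFp (not_lt_of_ge hi)
      · exact he.symm
    rw [hG] at hG0
    rcases mul_eq_zero.mp hG0 with hF0 | hZ0
    · rw [Finset.prod_eq_zero (Finset.mem_univ i) hF0, zero_mul]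
    · have hm : Finset.univ.inf' Finset.univ_nonempty x ≤ x i :=
        Finset.inf'_le x (Finset.mem_univ i)
      have h1 : FZ (Finset.univ.inf' Finset.univ_nonempty x) ≤ 0 :=
        hZ0 ▸ hFZmono hm
      have h2 : 0 ≤ FZ (Finset.univ.inf' Finset.univ_nonempty x) := (hFZmap _).1
      rw [le_antisymm h1 h2, mul_zero]
end

section
/- For independent random variables X₁, X₂, Z with distribution functions F₁, F₂, F_Z, and U₁ = max{X₁, Z}, U₂ = min{X₂, Z}, the mixed joint distribution H^σ(x₁,x₂) = P(U₁ ≤ x₁, U₂ > x₂) equals F₁(x₁)(1−F₂(x₂))·max{0, F_Z(x₁) − F_Z(x₂)}, and this equals max{0, G₁(x₁)Ĝ₂(x₂) − f₁(G₁(x₁))f₂(Ĝ₂(x₂))} where G₁ = F₁F_Z, Ĝ₂ = (1−F₂)(1−F_Z), f₁(G₁) = F₁(1−F_Z), f₂(Ĝ₂) = (1−F₂)F_Z on their positive ranges. -/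
open MeasureTheory ProbabilityTheory Set

theorem maxmin_mixed_dist_and_rmm (Ω : Type*) [MeasureSpace Ω]
    (μ : Measure Ω) [IsProbabilityMeasure μ]
    (X₁ X₂ Z : Ω → ℝ) (hX₁ : Measurable X₁) (hX₂ : Measurable X₂)
    (hZ : Measurable Z)
    (hindep : iIndepFun ![X₁, X₂, Z] μ)
    (F₁ F₂ FZ : ℝ → ℝ)
    (hF₁ : ∀ x, F₁ x = (μ {ω | X₁ ω ≤ x}).toReal)
    (hF₂ : ∀ x, F₂ x = (μ {ω | X₂ ω ≤ x}).toReal)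
    (hFZ : ∀ z, FZ z = (μ {ω | Z ω ≤ z}).toReal)
    (f₁ f₂ : ℝ → ℝ)
    (hf₁map : ∀ t ∈ Icc (0:ℝ) 1, f₁ t ∈ Icc (0:ℝ) 1)
    (hf₂map : ∀ t ∈ Icc (0:ℝ) 1, f₂ t ∈ Icc (0:ℝ) 1)
    (hf₁ : ∀ x : ℝ, 0 < F₁ x * FZ x → f₁ (F₁ x * FZ x) = F₁ x * (1 - FZ x))
    (hf₂ : ∀ x : ℝ, 0 < (1 - F₂ x) * (1 - FZ x) →
      f₂ ((1 - F₂ x) * (1 - FZ x)) = (1 - F₂ x) * FZ x) :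
    ∀ x₁ x₂ : ℝ,
      (μ {ω | max (X₁ ω) (Z ω) ≤ x₁ ∧ x₂ < min (X₂ ω) (Z ω)}).toReal =
        F₁ x₁ * (1 - F₂ x₂) * max 0 (FZ x₁ - FZ x₂) ∧
      (μ {ω | max (X₁ ω) (Z ω) ≤ x₁ ∧ x₂ < min (X₂ ω) (Z ω)}).toReal =
        max 0 ((F₁ x₁ * FZ x₁) * ((1 - F₂ x₂) * (1 - FZ x₂)) -
          f₁ (F₁ x₁ * FZ x₁) * f₂ ((1 - F₂ x₂) * (1 - FZ x₂))) := by
  intro x₁ x₂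
  -- basic bounds for distribution functions
  have hle1 : ∀ s : Set Ω, (μ s).toReal ≤ 1 := by
    intro s
    calc (μ s).toReal ≤ (1 : ENNReal).toReal :=
          ENNReal.toReal_mono ENNReal.one_ne_top prob_le_one
      _ = 1 := ENNReal.toReal_one
  have hnn : ∀ s : Set Ω, 0 ≤ (μ s).toReal := fun s => ENNReal.toReal_nonneg
  have hFZle : ∀ u v : ℝ, u ≤ v → FZ u ≤ FZ v := by
    intro u v h
    rw [hFZ, hFZ]
    exact ENNReal.toReal_mono (measure_ne_top μ _)
      (measure_mono fun ω hω => le_trans hω h)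
  have ha0 : 0 ≤ F₁ x₁ := by rw [hF₁]; exact hnn _
  have ha1 : F₁ x₁ ≤ 1 := by rw [hF₁]; exact hle1 _
  have hb0 : 0 ≤ FZ x₁ := by rw [hFZ]; exact hnn _
  have hb1 : FZ x₁ ≤ 1 := by rw [hFZ]; exact hle1 _
  have hc0 : 0 ≤ F₂ x₂ := by rw [hF₂]; exact hnn _
  have hc1 : F₂ x₂ ≤ 1 := by rw [hF₂]; exact hle1 _
  have hd0 : 0 ≤ FZ x₂ := by rw [hFZ]; exact hnn _
  have hd1 : FZ x₂ ≤ 1 := by rw [hFZ]; exact hle1 _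
  -- the three events
  set s : Fin 3 → Set Ω := ![X₁ ⁻¹' Iic x₁, X₂ ⁻¹' Ioi x₂, Z ⁻¹' Ioc x₂ x₁] with hs_def
  have hs0 : s 0 = X₁ ⁻¹' Iic x₁ := rfl
  have hs1 : s 1 = X₂ ⁻¹' Ioi x₂ := rfl
  have hs2' : s 2 = Z ⁻¹' Ioc x₂ x₁ := rfl
  have hset : {ω | max (X₁ ω) (Z ω) ≤ x₁ ∧ x₂ < min (X₂ ω) (Z ω)} = ⋂ i, s i := by
    ext ω
    simp only [mem_setOf_eq, mem_iInter, max_le_iff, lt_min_iff]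
    constructor
    · rintro ⟨⟨h1, h2⟩, h3, h4⟩
      intro i
      fin_cases i
      · exact h1
      · exact h3
      · exact ⟨h4, h2⟩
    · intro h
      have h0 := h 0
      have h1 := h 1
      have h2 := h 2
      rw [hs0] at h0; rw [hs1] at h1; rw [hs2'] at h2
      exact ⟨⟨h0, h2.2⟩, h1, h2.1⟩
  have hmeas : ∀ i, MeasurableSet[((fun _ : Fin 3 => (inferInstance : MeasurableSpace ℝ)) i).comap
      (![X₁, X₂, Z] i)] (s i) := by
    intro i
    fin_cases i
    · exact ⟨Iic x₁, measurableSet_Iic, rfl⟩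
    · exact ⟨Ioi x₂, measurableSet_Ioi, rfl⟩
    · exact ⟨Ioc x₂ x₁, measurableSet_Ioc, rfl⟩
  have hmul := hindep.meas_iInter hmeas
  -- compute the three factors
  have h0 : (μ (s 0)).toReal = F₁ x₁ := by rw [hF₁]; rfl
  have h1 : (μ (s 1)).toReal = 1 - F₂ x₂ := by
    have hcompl : s 1 = (X₂ ⁻¹' Iic x₂)ᶜ := by
      ext ω
      simp [hs_def, not_le]
    have hF₂' : (μ (X₂ ⁻¹' Iic x₂)).toReal = F₂ x₂ := (hF₂ x₂).symm
    rw [hcompl, measure_compl (hX₂ measurableSet_Iic) (measure_ne_top μ _), measure_univ,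
      ENNReal.toReal_sub_of_le prob_le_one ENNReal.one_ne_top, ENNReal.toReal_one, hF₂']
  have h2 : (μ (s 2)).toReal = max 0 (FZ x₁ - FZ x₂) := by
    rcases le_or_gt x₁ x₂ with h | h
    · have hempty : s 2 = ∅ := by
        rw [hs2']
        ext ω
        simp only [mem_preimage, mem_Ioc, mem_empty_iff_false, iff_false, not_and, not_le]
        intro h2; linarith
      rw [hempty, measure_empty]
      have := hFZle x₁ x₂ h
      simp [max_eq_left (by linarith : FZ x₁ - FZ x₂ ≤ 0)]
    · have hsdiff : s 2 = Z ⁻¹' Iic x₁ \ Z ⁻¹' Iic x₂ := by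
        rw [hs2']
        ext ω
        simp only [mem_preimage, mem_Ioc, mem_diff, mem_Iic, not_le]
        tauto
      have hsub : Z ⁻¹' Iic x₂ ⊆ Z ⁻¹' Iic x₁ := fun ω hω => le_trans hω h.le
      have hZ1 : (μ (Z ⁻¹' Iic x₁)).toReal = FZ x₁ := (hFZ x₁).symm
      have hZ2 : (μ (Z ⁻¹' Iic x₂)).toReal = FZ x₂ := (hFZ x₂).symm
      have hge : FZ x₂ ≤ FZ x₁ := hFZle x₂ x₁ h.le
      rw [hsdiff, measure_diff hsub (hZ measurableSet_Iic).nullMeasurableSet (measure_ne_top μ _),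
        ENNReal.toReal_sub_of_le (measure_mono hsub) (measure_ne_top μ _), hZ1, hZ2,
        max_eq_right (by linarith : (0:ℝ) ≤ FZ x₁ - FZ x₂)]
  have hmain : (μ {ω | max (X₁ ω) (Z ω) ≤ x₁ ∧ x₂ < min (X₂ ω) (Z ω)}).toReal =
      F₁ x₁ * (1 - F₂ x₂) * max 0 (FZ x₁ - FZ x₂) := by
    rw [hset, hmul, Fin.prod_univ_three, ENNReal.toReal_mul, ENNReal.toReal_mul, h0, h1, h2]
  refine ⟨hmain, ?_⟩
  rw [hmain]
  -- algebra
  set a := F₁ x₁ with ha_def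
  set b := FZ x₁ with hb_def
  set c := 1 - F₂ x₂ with hc_def
  set d := 1 - FZ x₂ with hd_def
  have hc0' : 0 ≤ c := by rw [hc_def]; linarith
  have hd0' : 0 ≤ d := by rw [hd_def]; linarith
  have hFZx2 : FZ x₂ = 1 - d := by rw [hd_def]; ring
  have hf1mem := hf₁map (a * b) ⟨mul_nonneg ha0 hb0, by nlinarith⟩
  have hf2mem := hf₂map (c * d) ⟨mul_nonneg hc0' hd0', by nlinarith⟩
  have hac : 0 ≤ a * c := mul_nonneg ha0 hc0'
  rcases lt_or_ge 0 (a * b) with hab | hab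
  · rcases lt_or_ge 0 (c * d) with hcd | hcd
    · rw [hf₁ x₁ hab, hf₂ x₂ hcd]
      have key : a * b * (c * d) - a * (1 - b) * ((1 - F₂ x₂) * FZ x₂)
          = a * c * (b - FZ x₂) := by
        rw [hc_def, hFZx2, hd_def]; ring
      rw [key]
      rcases le_or_gt (b - FZ x₂) 0 with ht | ht
      · rw [max_eq_left ht, max_eq_left (by nlinarith : a * c * (b - FZ x₂) ≤ 0), mul_zero]
      · rw [max_eq_right ht.le, max_eq_right (mul_nonneg hac ht.le)]
    · -- c * d = 0
      have hcd0 : c * d = 0 := le_antisymm hcd (mul_nonneg hc0' hd0')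
      have hfprod : 0 ≤ f₁ (a * b) * f₂ (c * d) := mul_nonneg hf1mem.1 hf2mem.1
      have hrhs : max (0:ℝ) (a * b * (c * d) - f₁ (a * b) * f₂ (c * d)) = 0 := by
        rw [hcd0, mul_zero, zero_sub]
        exact max_eq_left (by rw [hcd0] at hfprod; linarith)
      rw [hrhs]
      rcases mul_eq_zero.mp hcd0 with hc | hd
      · rw [hc, mul_zero, zero_mul]
      · have : max (0:ℝ) (b - FZ x₂) = 0 := max_eq_left (by rw [hFZx2, hd]; linarith)
        rw [this, mul_zero]
  · -- a * b = 0
    have hab0 : a * b = 0 := le_antisymm hab (mul_nonneg ha0 hb0)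
    have hfprod : 0 ≤ f₁ (a * b) * f₂ (c * d) := mul_nonneg hf1mem.1 hf2mem.1
    have hrhs : max (0:ℝ) (a * b * (c * d) - f₁ (a * b) * f₂ (c * d)) = 0 := by
      rw [hab0, zero_mul, zero_sub]
      exact max_eq_left (by rw [hab0] at hfprod; linarith)
    rw [hrhs]
    rcases mul_eq_zero.mp hab0 with ha | hb
    · rw [ha, zero_mul, zero_mul]
    · have : max (0:ℝ) (b - FZ x₂) = 0 := max_eq_left (by rw [hb]; linarith)
      rw [this, mul_zero]
end
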